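/- (Completeness of optimal disentangled representations.) Let V, T be random variables, and let V_S = f_S(V), V_X = f_X(V) be deterministic functions of V and T_S = g_S(T), T_X = g_X(T) be deterministic functions of T. Suppose the optimality conditions hold: I(T;V_S) = I(V;T), I(V;V_S|T) = 0, I(V;V_X|T) = H(V|T), I(T;V_X) = 0, and symmetrically I(V;T_S) = I(V;T), I(T;T_S|V) = 0, I(T;T_X|V) = H(T|V), I(V;T_X) = 0. Then the joint representations F_V = (V_S, V_X) and F_T = (T_S, T_X) are sufficient: I(V; F_V) = H(V) and I(T; F_T) = H(T). -/

import Mathlib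

open MeasureTheory ProbabilityTheory
open scoped ENNReal
set_option linter.unusedSectionVars false

namespace DisNCL

variable {Ω : Type*} [MeasurableSpace Ω]

/-- The probability that a random variable `X` takes the value `x`. -/
noncomputable def pr {S : Type*} (μ : Measure Ω) (X : Ω → S) (x : S) : ℝ :=
  (μ {ω | X ω = x}).toReal

/-- Shannon entropy `H(X)` of a finitely-valued random variable. -/
noncomputable def H {S : Type*} [Fintype S] (μ : Measure Ω) (X : Ω → S) : ℝ :=
  -∑ x, pr μ X x * Real.log (pr μ X x)

/-- Conditional entropy `H(X | Y) = ∑ y P(Y = y) H(X | Y = y)`, where the inner entropy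
is taken under the conditional measure given `Y = y`. -/
noncomputable def condH {S T : Type*} [Fintype S] [Fintype T]
    (μ : Measure Ω) (X : Ω → S) (Y : Ω → T) : ℝ :=
  ∑ y, pr μ Y y * H (ProbabilityTheory.cond μ {ω | Y ω = y}) X

/-- Mutual information `I(X;Y) = H(X) + H(Y) - H(X,Y)`. -/
noncomputable def MI {S T : Type*} [Fintype S] [Fintype T]
    (μ : Measure Ω) (X : Ω → S) (Y : Ω → T) : ℝ :=
  H μ X + H μ Y - H μ (fun ω => (X ω, Y ω))

/-- Conditional mutual information `I(X;Y|Z) = ∑ z P(Z = z) I(X;Y | Z = z)`, where the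
inner mutual information is taken under the conditional measure given `Z = z`. -/
noncomputable def CMI {S T U : Type*} [Fintype S] [Fintype T] [Fintype U]
    (μ : Measure Ω) (X : Ω → S) (Y : Ω → T) (Z : Ω → U) : ℝ :=
  ∑ z, pr μ Z z * MI (ProbabilityTheory.cond μ {ω | Z ω = z}) X Y

/-- `X` and `Y` are conditionally independent given `Z`
(written `X ⊥ Y | Z`): for all values,
`P(X = x, Y = y, Z = z) ⬝ P(Z = z) = P(X = x, Z = z) ⬝ P(Y = y, Z = z)`. -/
def CondIndep {S T U : Type*} (μ : Measure Ω) (X : Ω → S) (Y : Ω → T) (Z : Ω → U) : Prop :=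
  ∀ (x : S) (y : T) (z : U),
    pr μ (fun ω => (X ω, Y ω, Z ω)) (x, y, z) * pr μ Z z =
      pr μ (fun ω => (X ω, Z ω)) (x, z) * pr μ (fun ω => (Y ω, Z ω)) (y, z)

section Aux

variable {S T U : Type*}

lemma pr_nonneg (μ : Measure Ω) (X : Ω → S) (x : S) : 0 ≤ pr μ X x :=
  ENNReal.toReal_nonneg

lemma pair_fiber_eq (X : Ω → S) (Y : Ω → T) (x : S) (y : T) :
    {ω | (X ω, Y ω) = (x, y)} = {ω | X ω = x} ∩ {ω | Y ω = y} := by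
  ext ω; simp [Prod.ext_iff]

lemma pair_fiber_measurable {X : Ω → S} {Y : Ω → T}
    (hX : ∀ x, MeasurableSet {ω | X ω = x}) (hY : ∀ y, MeasurableSet {ω | Y ω = y})
    (x : S) (y : T) : MeasurableSet {ω | (X ω, Y ω) = (x, y)} := by
  rw [pair_fiber_eq]; exact (hX x).inter (hY y)

lemma pr_pair_comm (μ : Measure Ω) (X : Ω → S) (Y : Ω → T) (x : S) (y : T) :
    pr μ (fun ω => (X ω, Y ω)) (x, y) = pr μ (fun ω => (Y ω, X ω)) (y, x) := by
  have h : {ω | (X ω, Y ω) = (x, y)} = {ω | (Y ω, X ω) = (y, x)} := by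
    ext ω; simp [Prod.ext_iff, and_comm]
  unfold pr; rw [h]

lemma pr_pair_le_left (μ : Measure Ω) [IsFiniteMeasure μ] (X : Ω → S) (Y : Ω → T)
    (x : S) (y : T) : pr μ (fun ω => (X ω, Y ω)) (x, y) ≤ pr μ X x := by
  refine ENNReal.toReal_mono (measure_ne_top μ _) (measure_mono ?_)
  rw [pair_fiber_eq]; exact Set.inter_subset_left

lemma pr_pair_le_right (μ : Measure Ω) [IsFiniteMeasure μ] (X : Ω → S) (Y : Ω → T)
    (x : S) (y : T) : pr μ (fun ω => (X ω, Y ω)) (x, y) ≤ pr μ Y y := by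
  rw [pr_pair_comm]; exact pr_pair_le_left μ Y X y x

lemma sum_pr [Fintype S] (μ : Measure Ω) [IsProbabilityMeasure μ] (X : Ω → S)
    (hX : ∀ x, MeasurableSet {ω | X ω = x}) : ∑ x, pr μ X x = 1 := by
  have h : ∀ x : S, {ω | X ω = x} = X ⁻¹' {x} := fun x => rfl
  have hkey := MeasureTheory.sum_measure_preimage_singleton (μ := μ) (f := X) Finset.univ
    (fun y _ => by rw [← h]; exact hX y)
  simp only [Finset.coe_univ, Set.preimage_univ, measure_univ] at hkey
  unfold pr
  rw [← ENNReal.toReal_sum (fun a _ => measure_ne_top μ _)]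
  simp only [h, hkey, ENNReal.toReal_one]

lemma sum_pr_pair_right [Fintype T] (μ : Measure Ω) [IsFiniteMeasure μ]
    (X : Ω → S) (Y : Ω → T) (hY : ∀ y, MeasurableSet {ω | Y ω = y}) (x : S) :
    ∑ y, pr μ (fun ω => (X ω, Y ω)) (x, y) = pr μ X x := by
  have hpre : ∀ y : T, Y ⁻¹' {y} = {ω | Y ω = y} := fun y => by ext ω; simp
  have h : ∀ y : T, μ {ω | (X ω, Y ω) = (x, y)} = μ.restrict {ω | X ω = x} (Y ⁻¹' {y}) := by
    intro y
    rw [Measure.restrict_apply (by rw [hpre y]; exact hY y), hpre y, pair_fiber_eq,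
      Set.inter_comm]
  have hsum := MeasureTheory.sum_measure_preimage_singleton (μ := μ.restrict {ω | X ω = x})
    (f := Y) Finset.univ (fun y _ => hY y)
  simp only [Finset.coe_univ, Set.preimage_univ] at hsum
  unfold pr
  rw [← ENNReal.toReal_sum (fun a _ => by rw [h a]; exact measure_ne_top _ _)]
  congr 1
  rw [Finset.sum_congr rfl (fun y _ => h y), hsum, Measure.restrict_apply_univ]


lemma pr_cond_mul (μ : Measure Ω) [IsFiniteMeasure μ] (X : Ω → S) (Y : Ω → T)
    (hY : ∀ y, MeasurableSet {ω | Y ω = y}) (x : S) (y : T) :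
    pr μ Y y * pr (μ[|{ω | Y ω = y}]) X x = pr μ (fun ω => (X ω, Y ω)) (x, y) := by
  set s := {ω | Y ω = y} with hs
  have hc : (μ[|s]) {ω | X ω = x} = (μ s)⁻¹ * μ (s ∩ {ω | X ω = x}) :=
    cond_apply (hY y) μ {ω | X ω = x}
  have hset : {ω | (X ω, Y ω) = (x, y)} = s ∩ {ω | X ω = x} := by
    rw [pair_fiber_eq, Set.inter_comm]
  by_cases h0 : μ s = 0
  · have h1 : pr μ Y y = 0 := by unfold pr; rw [← hs, h0]; simp
    have h2 : μ {ω | (X ω, Y ω) = (x, y)} = 0 :=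
      le_antisymm (le_trans (measure_mono (by rw [hset]; exact Set.inter_subset_left)) h0.le)
        (zero_le)
    unfold pr; rw [← hs, h0, h2]; simp
  · unfold pr
    rw [← hs, hc, ENNReal.toReal_mul, ENNReal.toReal_inv, hset]
    have hne : (μ s).toReal ≠ 0 := by
      simp [ENNReal.toReal_eq_zero_iff, h0, measure_ne_top μ s]
    have hle : μ (s ∩ {ω | X ω = x}) ≤ μ s := measure_mono Set.inter_subset_left
    field_simp

lemma pr_cond_le_one (μ : Measure Ω) [IsFiniteMeasure μ] {s : Set Ω} (hs : MeasurableSet s)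
    (X : Ω → S) (x : S) : pr (μ[|s]) X x ≤ 1 := by
  unfold pr
  rw [cond_apply hs μ]
  by_cases h0 : μ s = 0
  · have : μ (s ∩ {ω | X ω = x}) = 0 :=
      le_antisymm (le_trans (measure_mono Set.inter_subset_left) h0.le) (zero_le)
    rw [this]; simp
  · have hle : (μ s)⁻¹ * μ (s ∩ {ω | X ω = x}) ≤ (μ s)⁻¹ * μ s :=
      mul_le_mul_right (measure_mono Set.inter_subset_left) _
    rw [ENNReal.inv_mul_cancel h0 (measure_ne_top μ s)] at hle
    calc ((μ s)⁻¹ * μ (s ∩ {ω | X ω = x})).toReal ≤ (1:ℝ≥0∞).toReal :=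
          ENNReal.toReal_mono ENNReal.one_ne_top hle
      _ = 1 := by simp

lemma H_nonneg [Fintype S] (μ : Measure Ω) (X : Ω → S) (h : ∀ x, pr μ X x ≤ 1) :
    0 ≤ H μ X := by
  unfold H
  rw [neg_nonneg]
  refine Finset.sum_nonpos fun x _ => ?_
  exact mul_nonpos_of_nonneg_of_nonpos (pr_nonneg μ X x)
    (Real.log_nonpos (pr_nonneg μ X x) (h x))

lemma H_cond_nonneg [Fintype S] (μ : Measure Ω) [IsFiniteMeasure μ] {s : Set Ω}
    (hs : MeasurableSet s) (X : Ω → S) : 0 ≤ H (μ[|s]) X :=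
  H_nonneg _ _ (fun x => pr_cond_le_one μ hs X x)

lemma condH_nonneg [Fintype S] [Fintype T] (μ : Measure Ω) [IsFiniteMeasure μ]
    (X : Ω → S) (Y : Ω → T) (hY : ∀ y, MeasurableSet {ω | Y ω = y}) :
    0 ≤ condH μ X Y :=
  Finset.sum_nonneg fun y _ =>
    mul_nonneg (pr_nonneg μ Y y) (H_cond_nonneg μ (hY y) X)

lemma mul_log_mul (a b : ℝ) (ha : 0 ≤ a) (hb : 0 ≤ b) :
    (a * b) * Real.log (a * b) = b * (a * Real.log a) + a * (b * Real.log b) := by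
  rcases ha.eq_or_lt with h | h
  · simp [← h]
  rcases hb.eq_or_lt with h' | h'
  · simp [← h']
  rw [Real.log_mul h.ne' h'.ne']
  ring


lemma H_pair [Fintype S] [Fintype T] (μ : Measure Ω) [IsFiniteMeasure μ]
    (X : Ω → S) (Y : Ω → T)
    (hX : ∀ x, MeasurableSet {ω | X ω = x}) (hY : ∀ y, MeasurableSet {ω | Y ω = y}) :
    H μ (fun ω => (X ω, Y ω)) = H μ Y + condH μ X Y := by
  have key : ∀ y, (∑ x, pr μ (fun ω => (X ω, Y ω)) (x, y) *
        Real.log (pr μ (fun ω => (X ω, Y ω)) (x, y)))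
      = pr μ Y y * Real.log (pr μ Y y) +
        pr μ Y y * ∑ x, pr (μ[|{ω | Y ω = y}]) X x *
          Real.log (pr (μ[|{ω | Y ω = y}]) X x) := by
    intro y
    have hterm : ∀ x, pr μ (fun ω => (X ω, Y ω)) (x, y) *
        Real.log (pr μ (fun ω => (X ω, Y ω)) (x, y))
        = pr (μ[|{ω | Y ω = y}]) X x * (pr μ Y y * Real.log (pr μ Y y)) +
          pr μ Y y * (pr (μ[|{ω | Y ω = y}]) X x *
            Real.log (pr (μ[|{ω | Y ω = y}]) X x)) := by
      intro x
      rw [← pr_cond_mul μ X Y hY x y]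
      exact mul_log_mul _ _ (pr_nonneg _ _ _) (pr_nonneg _ _ _)
    rw [Finset.sum_congr rfl (fun x _ => hterm x), Finset.sum_add_distrib,
      ← Finset.sum_mul, ← Finset.mul_sum]
    congr 1
    by_cases h0 : μ {ω | Y ω = y} = 0
    · have ha : pr μ Y y = 0 := by unfold pr; rw [h0]; simp
      rw [ha]; simp
    · haveI := cond_isProbabilityMeasure (μ := μ) h0
      rw [sum_pr _ X hX, one_mul]
  simp only [H, condH]
  rw [Fintype.sum_prod_type, Finset.sum_comm,
    Finset.sum_congr rfl (fun y _ => key y), Finset.sum_add_distrib, neg_add]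
  congr 1
  rw [← Finset.sum_neg_distrib]
  exact Finset.sum_congr rfl fun y _ => by ring

lemma MI_eq [Fintype S] [Fintype T] (μ : Measure Ω) [IsFiniteMeasure μ]
    (X : Ω → S) (Y : Ω → T)
    (hX : ∀ x, MeasurableSet {ω | X ω = x}) (hY : ∀ y, MeasurableSet {ω | Y ω = y}) :
    MI μ X Y = H μ X - condH μ X Y := by
  unfold MI; rw [H_pair μ X Y hX hY]; ring

lemma H_pair_comm [Fintype S] [Fintype T] (μ : Measure Ω) (X : Ω → S) (Y : Ω → T) :
    H μ (fun ω => (X ω, Y ω)) = H μ (fun ω => (Y ω, X ω)) := by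
  unfold H
  congr 1
  refine Fintype.sum_equiv (Equiv.prodComm S T) _ _ (fun p => ?_)
  have h := pr_pair_comm μ X Y p.1 p.2
  exact congrArg (fun t => t * Real.log t) h

lemma MI_symm [Fintype S] [Fintype T] (μ : Measure Ω) (X : Ω → S) (Y : Ω → T) :
    MI μ X Y = MI μ Y X := by
  unfold MI; rw [H_pair_comm]; ring

lemma gibbs {ι : Type*} [Fintype ι] (p q : ι → ℝ) (hp : ∀ i, 0 ≤ p i)
    (hq : ∀ i, 0 ≤ q i) (habs : ∀ i, q i = 0 → p i = 0)
    (hsum : ∑ i, q i ≤ ∑ i, p i) :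
    ∑ i, p i * Real.log (q i / p i) ≤ 0 := by
  have step : ∀ i, p i * Real.log (q i / p i) ≤ q i - p i := by
    intro i
    rcases (hp i).eq_or_lt with h | h
    · rw [← h]; simpa using hq i
    · have hqpos : 0 < q i := (hq i).lt_of_ne' (fun h0 => by
        have := habs i h0; exact absurd this.symm h.ne)
      have hdiv : 0 < q i / p i := div_pos hqpos h
      have := Real.log_le_sub_one_of_pos hdiv
      calc p i * Real.log (q i / p i) ≤ p i * (q i / p i - 1) := by
            exact mul_le_mul_of_nonneg_left this h.le
        _ = q i - p i := by field_simp
  calc ∑ i, p i * Real.log (q i / p i) ≤ ∑ i, (q i - p i) :=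
        Finset.sum_le_sum fun i _ => step i
    _ = ∑ i, q i - ∑ i, p i := Finset.sum_sub_distrib _ _
    _ ≤ 0 := by linarith


lemma sum_pr_pair_left [Fintype S] (μ : Measure Ω) [IsFiniteMeasure μ]
    (X : Ω → S) (Y : Ω → T) (hX : ∀ x, MeasurableSet {ω | X ω = x}) (y : T) :
    ∑ x, pr μ (fun ω => (X ω, Y ω)) (x, y) = pr μ Y y := by
  rw [Finset.sum_congr rfl (fun x _ => pr_pair_comm μ X Y x y)]
  exact sum_pr_pair_right μ Y X hX y

lemma MI_nonneg [Fintype S] [Fintype T] (μ : Measure Ω) [IsProbabilityMeasure μ]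
    (X : Ω → S) (Y : Ω → T)
    (hX : ∀ x, MeasurableSet {ω | X ω = x}) (hY : ∀ y, MeasurableSet {ω | Y ω = y}) :
    0 ≤ MI μ X Y := by
  set P : S × T → ℝ := fun p => pr μ (fun ω => (X ω, Y ω)) p with hP
  set Q : S × T → ℝ := fun p => pr μ X p.1 * pr μ Y p.2 with hQ
  have hPnn : ∀ p, 0 ≤ P p := fun p => pr_nonneg _ _ _
  have hQnn : ∀ p, 0 ≤ Q p := fun p => mul_nonneg (pr_nonneg _ _ _) (pr_nonneg _ _ _)
  have hPX : ∀ p : S × T, P p ≤ pr μ X p.1 := fun p => pr_pair_le_left μ X Y p.1 p.2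
  have hPY : ∀ p : S × T, P p ≤ pr μ Y p.2 := fun p => pr_pair_le_right μ X Y p.1 p.2
  have habs : ∀ p, Q p = 0 → P p = 0 := by
    intro p h
    rcases mul_eq_zero.mp h with h' | h'
    · exact le_antisymm (h' ▸ hPX p) (hPnn p)
    · exact le_antisymm (h' ▸ hPY p) (hPnn p)
  have hpairm : ∀ p : S × T, MeasurableSet {ω | (X ω, Y ω) = p} := by
    intro p
    have := pair_fiber_measurable hX hY p.1 p.2
    simpa using this
  have hsumP : ∑ p, P p = 1 := sum_pr μ (fun ω => (X ω, Y ω)) hpairm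
  have hsumQ : ∑ p, Q p = 1 := by
    rw [hQ, Fintype.sum_prod_type]
    simp only [← Finset.mul_sum, sum_pr μ Y hY, mul_one, sum_pr μ X hX]
  have hX' : ∑ p : S × T, P p * Real.log (pr μ X p.1)
      = ∑ x, pr μ X x * Real.log (pr μ X x) := by
    rw [Fintype.sum_prod_type]
    refine Finset.sum_congr rfl fun x _ => ?_
    rw [show (∑ y : T, P (x, y) * Real.log (pr μ X (x, y).1))
        = (∑ y : T, P (x, y)) * Real.log (pr μ X x) from by rw [Finset.sum_mul],
      sum_pr_pair_right μ X Y hY x]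
  have hY' : ∑ p : S × T, P p * Real.log (pr μ Y p.2)
      = ∑ y, pr μ Y y * Real.log (pr μ Y y) := by
    rw [Fintype.sum_prod_type, Finset.sum_comm]
    refine Finset.sum_congr rfl fun y _ => ?_
    rw [show (∑ x : S, P (x, y) * Real.log (pr μ Y (x, y).2))
        = (∑ x : S, P (x, y)) * Real.log (pr μ Y y) from by rw [Finset.sum_mul],
      sum_pr_pair_left μ X Y hX y]
  have hterm : ∀ p : S × T, P p * Real.log (Q p / P p)
      = P p * Real.log (pr μ X p.1) + P p * Real.log (pr μ Y p.2)
        - P p * Real.log (P p) := by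
    intro p
    by_cases hp0 : P p = 0
    · simp [hp0]
    · have hPpos : 0 < P p := (hPnn p).lt_of_ne' hp0
      have hxpos : 0 < pr μ X p.1 := lt_of_lt_of_le hPpos (hPX p)
      have hypos : 0 < pr μ Y p.2 := lt_of_lt_of_le hPpos (hPY p)
      have hQpos : 0 < Q p := mul_pos hxpos hypos
      rw [Real.log_div hQpos.ne' hp0, hQ, Real.log_mul hxpos.ne' hypos.ne']
      ring
  have e1 : H μ X = -∑ p : S × T, P p * Real.log (pr μ X p.1) := by
    unfold H; rw [hX']
  have e2 : H μ Y = -∑ p : S × T, P p * Real.log (pr μ Y p.2) := by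
    unfold H; rw [hY']
  have e3 : H μ (fun ω => (X ω, Y ω)) = -∑ p : S × T, P p * Real.log (P p) := rfl
  have hsum' : ∑ p : S × T, P p * Real.log (Q p / P p)
      = ∑ p : S × T, P p * Real.log (pr μ X p.1)
        + ∑ p : S × T, P p * Real.log (pr μ Y p.2)
        - ∑ p : S × T, P p * Real.log (P p) := by
    rw [Finset.sum_congr rfl (fun p _ => hterm p), Finset.sum_sub_distrib,
      Finset.sum_add_distrib]
  have hMI : MI μ X Y = -∑ p : S × T, P p * Real.log (Q p / P p) := by
    unfold MI; rw [e1, e2, e3, hsum']; ring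
  have hg := gibbs P Q hPnn hQnn habs (by rw [hsumP, hsumQ])
  rw [hMI]
  linarith


lemma cond_finite (μ : Measure Ω) [IsFiniteMeasure μ] (s : Set Ω) :
    IsFiniteMeasure (μ[|s]) := by
  constructor
  rw [ProbabilityTheory.cond, Measure.smul_apply, Measure.restrict_apply_univ, smul_eq_mul]
  by_cases h0 : μ s = 0
  · rw [h0, mul_zero]; exact ENNReal.zero_lt_top
  · rw [ENNReal.inv_mul_cancel h0 (measure_ne_top μ s)]; exact ENNReal.one_lt_top

lemma CMI_symm [Fintype S] [Fintype T] [Fintype U] (μ : Measure Ω)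
    (X : Ω → S) (Y : Ω → T) (Z : Ω → U) : CMI μ X Y Z = CMI μ Y X Z := by
  unfold CMI
  exact Finset.sum_congr rfl fun z _ => by rw [MI_symm]

lemma CMI_nonneg [Fintype S] [Fintype T] [Fintype U] (μ : Measure Ω) [IsFiniteMeasure μ]
    (X : Ω → S) (Y : Ω → T) (Z : Ω → U)
    (hX : ∀ x, MeasurableSet {ω | X ω = x}) (hY : ∀ y, MeasurableSet {ω | Y ω = y}) :
    0 ≤ CMI μ X Y Z := by
  refine Finset.sum_nonneg fun z _ => ?_
  by_cases h0 : μ {ω | Z ω = z} = 0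
  · have : pr μ Z z = 0 := by unfold pr; rw [h0]; simp
    rw [this, zero_mul]
  · haveI := cond_isProbabilityMeasure (μ := μ) h0
    exact mul_nonneg (pr_nonneg _ _ _) (MI_nonneg _ X Y hX hY)

lemma CMI_eq [Fintype S] [Fintype T] [Fintype U] (μ : Measure Ω) [IsFiniteMeasure μ]
    (X : Ω → S) (Y : Ω → T) (Z : Ω → U)
    (hX : ∀ x, MeasurableSet {ω | X ω = x}) (hY : ∀ y, MeasurableSet {ω | Y ω = y})
    (hZ : ∀ z, MeasurableSet {ω | Z ω = z}) :
    CMI μ X Y Z = condH μ X Z - condH μ X (fun ω => (Y ω, Z ω)) := by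
  have hMI : ∀ z, MI (μ[|{ω | Z ω = z}]) X Y
      = H (μ[|{ω | Z ω = z}]) X - condH (μ[|{ω | Z ω = z}]) X Y := by
    intro z
    haveI := cond_finite μ {ω | Z ω = z}
    exact MI_eq _ X Y hX hY
  have hterm : ∀ (y : T) (z : U),
      pr μ Z z * (pr (μ[|{ω | Z ω = z}]) Y y *
        H ((μ[|{ω | Z ω = z}])[|{ω | Y ω = y}]) X)
      = pr μ (fun ω => (Y ω, Z ω)) (y, z) *
        H (μ[|{ω | (Y ω, Z ω) = (y, z)}]) X := by
    intro y z
    have hpr : pr μ Z z * pr (μ[|{ω | Z ω = z}]) Y y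
        = pr μ (fun ω => (Y ω, Z ω)) (y, z) := pr_cond_mul μ Y Z hZ y z
    have hcc : (μ[|{ω | Z ω = z}])[|{ω | Y ω = y}]
        = μ[|{ω | (Y ω, Z ω) = (y, z)}] := by
      rw [cond_cond_eq_cond_inter (hZ z) (hY y), pair_fiber_eq, Set.inter_comm]
    rw [← mul_assoc, hpr, hcc]
  have hsecond : (∑ z, pr μ Z z * condH (μ[|{ω | Z ω = z}]) X Y)
      = condH μ X (fun ω => (Y ω, Z ω)) := by
    unfold condH
    rw [Fintype.sum_prod_type, Finset.sum_comm]
    simp only [Finset.mul_sum]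
    exact Finset.sum_congr rfl fun z _ => Finset.sum_congr rfl fun y _ => hterm y z
  calc CMI μ X Y Z
      = ∑ z, (pr μ Z z * H (μ[|{ω | Z ω = z}]) X
          - pr μ Z z * condH (μ[|{ω | Z ω = z}]) X Y) := by
        unfold CMI
        exact Finset.sum_congr rfl fun z _ => by rw [hMI z, mul_sub]
    _ = condH μ X Z - ∑ z, pr μ Z z * condH (μ[|{ω | Z ω = z}]) X Y := by
        rw [Finset.sum_sub_distrib]; rfl
    _ = condH μ X Z - condH μ X (fun ω => (Y ω, Z ω)) := by rw [hsecond]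

lemma condH_comp_inj [Fintype S] {U' : Type*} [Fintype U] [Fintype U']
    (μ : Measure Ω) (X : Ω → S) (W : Ω → U) (e : U → U') (he : Function.Injective e) :
    condH μ X (fun ω => e (W ω)) = condH μ X W := by
  classical
  unfold condH
  have hzero : ∀ u' ∈ Finset.univ, u' ∉ Finset.univ.image e →
      pr μ (fun ω => e (W ω)) u' * H (μ[|{ω | e (W ω) = u'}]) X = 0 := by
    intro u' _ hu'
    have hempty : {ω | e (W ω) = u'} = ∅ := by
      ext ω
      simp only [Set.mem_setOf_eq, Set.mem_empty_iff_false, iff_false]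
      intro h
      exact hu' (Finset.mem_image.mpr ⟨W ω, Finset.mem_univ _, h⟩)
    have hpr : pr μ (fun ω => e (W ω)) u' = 0 := by unfold pr; rw [hempty]; simp
    rw [hpr, zero_mul]
  rw [← Finset.sum_subset (Finset.subset_univ _) hzero,
    Finset.sum_image (fun a _ b _ h => he h)]
  refine Finset.sum_congr rfl fun u _ => ?_
  have hset : {ω | e (W ω) = e u} = {ω | W ω = u} := by
    ext ω; simp [he.eq_iff]
  simp only [pr, hset]


lemma pair_fiber_measurable' {X : Ω → S} {Y : Ω → T}
    (hX : ∀ x, MeasurableSet {ω | X ω = x}) (hY : ∀ y, MeasurableSet {ω | Y ω = y}) :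
    ∀ p : S × T, MeasurableSet {ω | (X ω, Y ω) = p} := fun p => by
  have := pair_fiber_measurable hX hY p.1 p.2
  simpa using this

end Aux

lemma main_aux {SV ST AS AX : Type*}
    [Fintype SV] [MeasurableSpace SV] [MeasurableSingletonClass SV]
    [Fintype ST] [MeasurableSpace ST] [MeasurableSingletonClass ST]
    [Fintype AS] [Fintype AX]
    (μ : Measure Ω) [IsProbabilityMeasure μ]
    (V : Ω → SV) (T : Ω → ST) (hV : Measurable V) (hT : Measurable T)
    (fS : SV → AS) (fX : SV → AX)
    (h1 : MI μ T (fun ω => fS (V ω)) = MI μ V T)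
    (h2 : CMI μ V (fun ω => fX (V ω)) T = condH μ V T) :
    MI μ V (fun ω => (fS (V ω), fX (V ω))) = H μ V := by
  have hVm : ∀ x, MeasurableSet {ω | V ω = x} := fun x => hV (measurableSet_singleton x)
  have hTm : ∀ t, MeasurableSet {ω | T ω = t} := fun t => hT (measurableSet_singleton t)
  have hVSm : ∀ a, MeasurableSet {ω | fS (V ω) = a} := fun a =>
    hV ((Set.toFinite {v | fS v = a}).measurableSet)
  have hVXm : ∀ a, MeasurableSet {ω | fX (V ω) = a} := fun a =>
    hV ((Set.toFinite {v | fX v = a}).measurableSet)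
  have hFm : ∀ p : AS × AX, MeasurableSet {ω | (fS (V ω), fX (V ω)) = p} := fun p =>
    hV ((Set.toFinite {v | (fS v, fX v) = p}).measurableSet)
  -- condH μ T (fS ∘ V) = condH μ T V
  have e1 : MI μ T (fun ω => fS (V ω)) = H μ T - condH μ T (fun ω => fS (V ω)) :=
    MI_eq μ _ _ hTm hVSm
  have e2 : MI μ V T = H μ T - condH μ T V := by
    rw [MI_symm]; exact MI_eq μ T V hTm hVm
  have hTV : condH μ T (fun ω => fS (V ω)) = condH μ T V := by
    rw [e1, e2] at h1; linarith
  -- condH μ T F ≤ condH μ T (fS ∘ V)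
  have c1 : 0 ≤ CMI μ T (fun ω => fX (V ω)) (fun ω => fS (V ω)) :=
    CMI_nonneg μ _ _ _ hTm hVXm
  have c1' : CMI μ T (fun ω => fX (V ω)) (fun ω => fS (V ω))
      = condH μ T (fun ω => fS (V ω)) - condH μ T (fun ω => (fX (V ω), fS (V ω))) :=
    CMI_eq μ _ _ _ hTm hVXm hVSm
  have swap1 : condH μ T (fun ω => (fS (V ω), fX (V ω)))
      = condH μ T (fun ω => (fX (V ω), fS (V ω))) :=
    (condH_comp_inj μ T (fun ω => (fS (V ω), fX (V ω)))
      (fun q : AS × AX => ((q.2, q.1) : AX × AS))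
      (fun a b h => by
        simp only [Prod.ext_iff] at h ⊢
        tauto)).symm
  -- condH μ T (V, F) = condH μ T V
  have inj2 : Function.Injective (fun v : SV => (v, (fS v, fX v))) :=
    fun a b h => congrArg Prod.fst h
  have s2 : condH μ T (fun ω => (V ω, (fS (V ω), fX (V ω)))) = condH μ T V :=
    condH_comp_inj μ T V _ inj2
  -- CMI μ T V F = 0
  have c3 : CMI μ T V (fun ω => (fS (V ω), fX (V ω)))
      = condH μ T (fun ω => (fS (V ω), fX (V ω)))
        - condH μ T (fun ω => (V ω, (fS (V ω), fX (V ω)))) :=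
    CMI_eq μ T V _ hTm hVm hFm
  have c3nn : 0 ≤ CMI μ T V (fun ω => (fS (V ω), fX (V ω))) :=
    CMI_nonneg μ _ _ _ hTm hVm
  have c3z : CMI μ T V (fun ω => (fS (V ω), fX (V ω))) = 0 := by
    rw [c3, s2]; rw [c3, s2] at c3nn; linarith
  -- condH μ V F = condH μ V (T, F)
  have c5 : CMI μ V T (fun ω => (fS (V ω), fX (V ω)))
      = condH μ V (fun ω => (fS (V ω), fX (V ω)))
        - condH μ V (fun ω => (T ω, (fS (V ω), fX (V ω)))) :=
    CMI_eq μ V T _ hVm hTm hFm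
  have c45 : CMI μ V T (fun ω => (fS (V ω), fX (V ω))) = 0 := by
    rw [CMI_symm]; exact c3z
  -- condH μ V (fX ∘ V, T) = 0
  have hVXTm : ∀ p : AX × ST, MeasurableSet {ω | (fX (V ω), T ω) = p} :=
    pair_fiber_measurable' hVXm hTm
  have c6 : CMI μ V (fun ω => fX (V ω)) T
      = condH μ V T - condH μ V (fun ω => (fX (V ω), T ω)) :=
    CMI_eq μ V _ T hVm hVXm hTm
  have cVXT : condH μ V (fun ω => (fX (V ω), T ω)) = 0 := by
    rw [c6] at h2; linarith
  -- condH μ V (fS ∘ V, (fX ∘ V, T)) = 0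
  have c7 : CMI μ V (fun ω => fS (V ω)) (fun ω => (fX (V ω), T ω))
      = condH μ V (fun ω => (fX (V ω), T ω))
        - condH μ V (fun ω => (fS (V ω), (fX (V ω), T ω))) :=
    CMI_eq μ V _ _ hVm hVSm hVXTm
  have c7nn : 0 ≤ CMI μ V (fun ω => fS (V ω)) (fun ω => (fX (V ω), T ω)) :=
    CMI_nonneg μ _ _ _ hVm hVSm
  have cGnn : 0 ≤ condH μ V (fun ω => (fS (V ω), (fX (V ω), T ω))) :=
    condH_nonneg μ V _ (pair_fiber_measurable' hVSm hVXTm)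
  have cG : condH μ V (fun ω => (fS (V ω), (fX (V ω), T ω))) = 0 := by
    rw [c7, cVXT] at c7nn; linarith
  -- reindex (T, F) to (fS ∘ V, (fX ∘ V, T))
  have inj8 : Function.Injective
      (fun p : AS × (AX × ST) => ((p.2.2, (p.1, p.2.1)) : ST × (AS × AX))) := by
    intro a b h
    simp only [Prod.ext_iff] at h ⊢
    tauto
  have s8 : condH μ V (fun ω => (T ω, (fS (V ω), fX (V ω))))
      = condH μ V (fun ω => (fS (V ω), (fX (V ω), T ω))) :=
    condH_comp_inj μ V (fun ω => (fS (V ω), (fX (V ω), T ω))) _ inj8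
  have cF : condH μ V (fun ω => (fS (V ω), fX (V ω))) = 0 := by
    rw [c45] at c5
    rw [s8, cG] at c5
    linarith
  rw [MI_eq μ V _ hVm hFm, cF, sub_zero]

/-- **Completeness.** If `V_S = f_S(V)`, `V_X = f_X(V)`, `T_S = g_S(T)`,
`T_X = g_X(T)` satisfy the optimality conditions, then the joint representations
`F_V = (V_S, V_X)` and `F_T = (T_S, T_X)` are sufficient:
`I(V; F_V) = H(V)` and `I(T; F_T) = H(T)`. -/
theorem completeness_of_optimal_representations
    {SV ST AS AX BS BX : Type*}
    [Fintype SV] [Nonempty SV] [MeasurableSpace SV] [MeasurableSingletonClass SV]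
    [Fintype ST] [Nonempty ST] [MeasurableSpace ST] [MeasurableSingletonClass ST]
    [Fintype AS] [Nonempty AS] [Fintype AX] [Nonempty AX]
    [Fintype BS] [Nonempty BS] [Fintype BX] [Nonempty BX]
    (μ : Measure Ω) [IsProbabilityMeasure μ]
    (V : Ω → SV) (T : Ω → ST)
    (hV : Measurable V) (hT : Measurable T)
    (fS : SV → AS) (fX : SV → AX) (gS : ST → BS) (gX : ST → BX)
    (hVS_inv : MI μ T (fun ω => fS (V ω)) = MI μ V T)
    (hVS_min : CMI μ V (fun ω => fS (V ω)) T = 0)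
    (hVX_max : CMI μ V (fun ω => fX (V ω)) T = condH μ V T)
    (hVX_min : MI μ T (fun ω => fX (V ω)) = 0)
    (hTS_inv : MI μ V (fun ω => gS (T ω)) = MI μ V T)
    (hTS_min : CMI μ T (fun ω => gS (T ω)) V = 0)
    (hTX_max : CMI μ T (fun ω => gX (T ω)) V = condH μ T V)
    (hTX_min : MI μ V (fun ω => gX (T ω)) = 0) :
    MI μ V (fun ω => (fS (V ω), fX (V ω))) = H μ V ∧
      MI μ T (fun ω => (gS (T ω), gX (T ω))) = H μ T := by
  refine ⟨main_aux μ V T hV hT fS fX hVS_inv hVX_max, ?_⟩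
  refine main_aux μ T V hT hV gS gX ?_ hTX_max
  rw [hTS_inv]
  exact MI_symm μ V T

end DisNCL
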